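/- Let G be a simple graph on a finite vertex set V with |V| = N and let i, j ∈ V be distinct. Suppose f is an (i,j)-feasible flow for G, (t,u,v) is an (i,j)-dual-feasible triple for G, and their values are equal: Σ_{k,l∈V} f(k,l) = Σ_{{k,l}∈E} u({k,l}) + t(i) − t(j) = w for some w ∈ ℝ. Then i and j are reachable from each other in G and w = dist_G(i,j), the graph distance between i and j in G. (A feasible primal–dual pair with zero gap certifies that the common value is the shortest-path length.) -/

import Mathlib

/-- `f : V → V → ℝ` is an `(i,j)`-feasible flow for the simple graph `G`
(a feasible point of the paper's primal shortest-path LP (10)–(14)). -/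
def IsFeasibleFlow {V : Type*} [Fintype V] [DecidableEq V]
    (G : SimpleGraph V) (i j : V) (f : V → V → ℝ) : Prop :=
  (∀ k l, 0 ≤ f k l) ∧
  (∀ k, f k k = 0) ∧
  (∀ k l, G.Adj k l → f k l + f l k ≤ 1) ∧
  (∀ k l, k ≠ l → ¬ G.Adj k l → f k l = 0) ∧
  (∀ k, (∑ l, f k l) - (∑ l, f l k) =
    if k = i then 1 else if k = j then -1 else 0)

/-- `(t, u, v)` is a dual-feasible triple for the simple graph `G`
(a feasible point of the paper's dual shortest-path LP (15)–(19)), where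
`u` and `v` are indexed by unordered pairs `{k,l}` of distinct vertices and
`N - 2 = |V| - 2` is the "big-M" coefficient. -/
def IsDualFeasible {V : Type*} [Fintype V] [DecidableEq V]
    (G : SimpleGraph V) [DecidableRel G.Adj]
    (t : V → ℝ) (u v : Sym2 V → ℝ) : Prop :=
  ∀ k l : V, k ≠ l →
    v s(k, l) + t k - t l ≤ 1 ∧
    v s(k, l) + t l - t k ≤ 1 ∧
    u s(k, l) ≤ v s(k, l) +
      ((Fintype.card V : ℝ) - 2) * (1 - if G.Adj k l then 1 else 0) ∧
    u s(k, l) ≤ 0 ∧ v s(k, l) ≤ 0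

/-- The objective value of the dual triple `(t, u, v)` for the vertex pair
`(i, j)`: `∑_{{k,l}∈E} u {k,l} + t i - t j`, the sum running over all
unordered pairs of distinct vertices. -/
def dualValue {V : Type*} [Fintype V] [DecidableEq V]
    (t : V → ℝ) (u : Sym2 V → ℝ) (i j : V) : ℝ :=
  (∑ e ∈ Finset.univ.filter (fun e : Sym2 V => ¬ e.IsDiag), u e) + t i - t j



section Aux

open Finset

private lemma walk_telescope {V : Type*} (G : SimpleGraph V) (t : V → ℝ) :
    ∀ {a b : V} (p : G.Walk a b),
      (p.darts.map (fun d => t d.toProd.1 - t d.toProd.2)).sum = t a - t b := by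
  intro a b p
  induction p with
  | nil => simp
  | cons h q ih => simp [ih]

private lemma list_sum_map_sub' {α : Type*} (l : List α) (f g : α → ℝ) :
    (l.map (fun x => f x - g x)).sum = (l.map f).sum - (l.map g).sum := by
  induction l with
  | nil => simp
  | cons a l ih => simp [ih]; ring

private lemma list_sum_map_one' {α : Type*} (l : List α) :
    (l.map (fun _ => (1:ℝ))).sum = l.length := by
  induction l with
  | nil => simp
  | cons a l ih => simp [ih]; ring

/-- An `(i,j)`-feasible flow certifies reachability of `j` from `i`. -/
private lemma reachable_of_feasibleFlow {V : Type*} [Fintype V] [DecidableEq V]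
    (G : SimpleGraph V) (i j : V) (f : V → V → ℝ)
    (hf : IsFeasibleFlow G i j f) : G.Reachable i j := by
  classical
  obtain ⟨hpos, hdiag, _hcap, hnadj, hcons⟩ := hf
  -- the support graph of the flow
  let H : SimpleGraph V :=
    { Adj := fun k l => G.Adj k l ∧ (0 < f k l ∨ 0 < f l k)
      symm := ⟨fun a b h => ⟨h.1.symm, h.2.symm⟩⟩
      loopless := ⟨fun a h => G.loopless.irrefl a h.1⟩ }
  have hHG : H ≤ G := fun {a b} h => h.1
  by_contra hnr
  set T : Finset V := Finset.univ.filter (fun k => H.Reachable i k) with hT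
  have hiT : i ∈ T := by
    simp only [hT, Finset.mem_filter, Finset.mem_univ, true_and]
    exact SimpleGraph.Reachable.refl i
  have hjT : j ∉ T := by
    simp only [hT, Finset.mem_filter, Finset.mem_univ, true_and]
    intro hR
    exact hnr (hR.mono hHG)
  -- flow does not leave T
  have hcut : ∀ k ∈ T, ∀ l ∈ Tᶜ, f k l = 0 := by
    intro k hk l hl
    by_contra hne
    have hklpos : 0 < f k l := lt_of_le_of_ne (hpos k l) (Ne.symm hne)
    have hkl : k ≠ l := by
      rintro rfl; exact hne (hdiag k)
    have hadj : G.Adj k l := by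
      by_contra hna; exact hne (hnadj k l hkl hna)
    have hHadj : H.Adj k l := ⟨hadj, Or.inl hklpos⟩
    have hkR : H.Reachable i k := by
      simpa [hT] using hk
    have : l ∈ T := by
      simp only [hT, Finset.mem_filter, Finset.mem_univ, true_and]
      exact hkR.trans hHadj.reachable
    simp [this] at hl
  -- sum the conservation constraints over T
  have hsum1 : ∑ k ∈ T, ((∑ l, f k l) - (∑ l, f l k)) = 1 := by
    have : ∀ k ∈ T, ((∑ l, f k l) - (∑ l, f l k)) =
        if k = i then (1:ℝ) else 0 := by
      intro k hk
      rw [hcons k]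
      by_cases hki : k = i
      · simp [hki]
      · have hkj : k ≠ j := by rintro rfl; exact hjT hk
        simp [hki, hkj]
    rw [Finset.sum_congr rfl this, Finset.sum_ite_eq' T i (fun _ => (1:ℝ))]
    simp [hiT]
  have hsplit : ∀ g : V → ℝ, (∑ l, g l) = (∑ l ∈ T, g l) + (∑ l ∈ Tᶜ, g l) :=
    fun g => (Finset.sum_add_sum_compl T g).symm
  have hTT : ∑ k ∈ T, ∑ l ∈ T, f k l = ∑ k ∈ T, ∑ l ∈ T, f l k :=
    Finset.sum_comm
  have hout : ∑ k ∈ T, ∑ l ∈ Tᶜ, f k l = 0 :=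
    Finset.sum_eq_zero fun k hk => Finset.sum_eq_zero fun l hl => hcut k hk l hl
  have hin : 0 ≤ ∑ k ∈ T, ∑ l ∈ Tᶜ, f l k :=
    Finset.sum_nonneg fun k _ => Finset.sum_nonneg fun l _ => hpos l k
  have : (1:ℝ) ≤ 0 := by
    calc (1:ℝ) = ∑ k ∈ T, ((∑ l, f k l) - (∑ l, f l k)) := hsum1.symm
      _ = (∑ k ∈ T, ∑ l ∈ T, f k l) + (∑ k ∈ T, ∑ l ∈ Tᶜ, f k l)
          - ((∑ k ∈ T, ∑ l ∈ T, f l k) + (∑ k ∈ T, ∑ l ∈ Tᶜ, f l k)) := by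
            rw [Finset.sum_sub_distrib]
            congr 1
            · rw [← Finset.sum_add_distrib]
              exact Finset.sum_congr rfl fun k _ => hsplit (fun l => f k l)
            · rw [← Finset.sum_add_distrib]
              exact Finset.sum_congr rfl fun k _ => hsplit (fun l => f l k)
      _ = - ∑ k ∈ T, ∑ l ∈ Tᶜ, f l k := by rw [hTT, hout]; ring
      _ ≤ 0 := by linarith
  linarith

end Aux

/-- **Strong-duality certificate for shortest-path encoding.**  If an
`(i,j)`-feasible flow `f` for `G` and an `(i,j)`-dual-feasible triple
`(t,u,v)` for `G` have equal values, both equal to `w`, then `i` and `j`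
are reachable from each other in `G` and `w` equals the graph distance
`dist_G(i,j)`.  This justifies the paper's encoding (constraints (11)–(14),
(16)–(19), (20), (21)) of shortest-path lengths without using the
objective function. -/
theorem shortestPath_zero_gap_certifies_dist {V : Type*} [Fintype V] [DecidableEq V]
    (G : SimpleGraph V) [DecidableRel G.Adj] (i j : V) (hij : i ≠ j)
    (f : V → V → ℝ) (t : V → ℝ) (u v : Sym2 V → ℝ) (w : ℝ)
    (hf : IsFeasibleFlow G i j f) (hd : IsDualFeasible G t u v)
    (hprimal : (∑ k, ∑ l, f k l) = w) (hdual : dualValue t u i j = w) :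
    G.Reachable i j ∧ w = (G.dist i j : ℝ) := by
  classical
  obtain ⟨hpos, hdiag, hcap, hnadj, hcons⟩ := hf
  have hreach : G.Reachable i j := reachable_of_feasibleFlow G i j f
    ⟨hpos, hdiag, hcap, hnadj, hcons⟩
  refine ⟨hreach, ?_⟩
  set D : ℕ := G.dist i j with hD
  -- ### Lower bound: D ≤ w, via the potential φ
  set φ : V → ℝ := fun k => min ((G.dist i k : ℕ) : ℝ) ((D : ℕ) : ℝ) with hφ
  have hφi : φ i = 0 := by
    simp [hφ, SimpleGraph.dist_self]
  have hφj : φ j = (D : ℝ) := by simp [hφ, hD]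
  have hφadj : ∀ k l, G.Adj k l → φ l - φ k ≤ 1 := by
    intro k l hadj
    by_cases hr : G.Reachable i k
    · obtain ⟨p, hp⟩ := hr.exists_walk_length_eq_dist
      have hle : G.dist i l ≤ G.dist i k + 1 := by
        have := G.dist_le (p.concat hadj)
        simpa [SimpleGraph.Walk.length_concat, hp] using this
      have hleR : ((G.dist i l : ℕ) : ℝ) ≤ ((G.dist i k : ℕ) : ℝ) + 1 := by
        exact_mod_cast hle
      simp only [hφ]
      rcases le_total ((G.dist i k : ℕ) : ℝ) ((D:ℕ) : ℝ) with h | h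
      · have h1 : min ((G.dist i l : ℕ) : ℝ) ((D:ℕ):ℝ) ≤ ((G.dist i k : ℕ) : ℝ) + 1 :=
          le_trans (min_le_left _ _) hleR
        rw [min_eq_left h]; linarith
      · have h1 : min ((G.dist i l : ℕ) : ℝ) ((D:ℕ):ℝ) ≤ ((D:ℕ):ℝ) := min_le_right _ _
        rw [min_eq_right h]; linarith
    · have hrl : ¬ G.Reachable i l := fun h => hr (h.trans hadj.symm.reachable)
      have h1 : G.dist i k = 0 := SimpleGraph.dist_eq_zero_of_not_reachable hr
      have h2 : G.dist i l = 0 := SimpleGraph.dist_eq_zero_of_not_reachable hrl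
      simp [hφ, h1, h2]
  -- the telescoping identity
  have e1 : ∑ k, ∑ l, f k l * φ l = ∑ k, φ k * ∑ l, f l k := by
    rw [Finset.sum_comm]
    simp only [Finset.mul_sum]
    exact Finset.sum_congr rfl fun k _ => Finset.sum_congr rfl fun l _ => mul_comm _ _
  have e2 : ∑ k, ∑ l, f k l * φ k = ∑ k, φ k * ∑ l, f k l := by
    simp only [Finset.mul_sum]
    exact Finset.sum_congr rfl fun k _ => Finset.sum_congr rfl fun l _ => mul_comm _ _
  have key : ∑ k, ∑ l, f k l * (φ l - φ k) = (D : ℝ) := by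
    have step1 : ∑ k, ∑ l, f k l * (φ l - φ k)
        = ∑ k, φ k * ((∑ l, f l k) - (∑ l, f k l)) := by
      simp only [mul_sub, Finset.sum_sub_distrib, e1, e2]
    rw [step1]
    have step2 : ∀ k, φ k * ((∑ l, f l k) - (∑ l, f k l))
        = (if k = j then φ j else 0) - (if k = i then φ i else 0) := by
      intro k
      have : (∑ l, f l k) - (∑ l, f k l)
          = -(if k = i then (1:ℝ) else if k = j then -1 else 0) := by
        rw [← hcons k]; ring
      rw [this]
      by_cases hki : k = i
      · subst hki
        simp [hij]
      · by_cases hkj : k = j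
        · subst hkj; simp [hki]
        · simp [hki, hkj]
    rw [Finset.sum_congr rfl (fun k _ => step2 k), Finset.sum_sub_distrib,
      Finset.sum_ite_eq' Finset.univ j (fun _ => φ j),
      Finset.sum_ite_eq' Finset.univ i (fun _ => φ i)]
    simp [hφi, hφj]
  have hterm : ∀ k l, f k l * (φ l - φ k) ≤ f k l := by
    intro k l
    by_cases hkl : k = l
    · subst hkl; simp [hdiag k]
    · by_cases hadj : G.Adj k l
      · calc f k l * (φ l - φ k) ≤ f k l * 1 :=
              mul_le_mul_of_nonneg_left (hφadj k l hadj) (hpos k l)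
          _ = f k l := mul_one _
      · simp [hnadj k l hkl hadj]
  have hlow : (D : ℝ) ≤ w := by
    rw [← key, ← hprimal]
    exact Finset.sum_le_sum fun k _ => Finset.sum_le_sum fun l _ => hterm k l
  -- ### Upper bound: w ≤ D, via a shortest path and the dual constraints
  obtain ⟨p, hp⟩ := hreach.exists_walk_length_eq_dist
  set q : G.Walk i j := (p.toPath : G.Walk i j) with hq
  have hqlen : q.length = D := by
    refine le_antisymm ?_ ?_
    · calc q.length ≤ p.length := SimpleGraph.Walk.length_bypass_le p
        _ = D := hp
    · exact G.dist_le q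
  have hqnodup : q.edges.Nodup := p.toPath.2.isTrail.edges_nodup
  set Eq : Finset (Sym2 V) := q.edges.toFinset with hEq
  set Eall : Finset (Sym2 V) := Finset.univ.filter (fun e : Sym2 V => ¬ e.IsDiag)
    with hEall
  have hsubE : Eq ⊆ Eall := by
    intro e he
    rw [hEq, List.mem_toFinset] at he
    have : e ∈ G.edgeSet := q.edges_subset_edgeSet he
    simp only [hEall, Finset.mem_filter, Finset.mem_univ, true_and]
    exact G.not_isDiag_of_mem_edgeSet this
  have hu_nonpos : ∀ e ∈ Eall, u e ≤ 0 := by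
    intro e he
    induction e using Sym2.inductionOn with
    | hf k l =>
      simp only [hEall, Finset.mem_filter, Sym2.isDiag_iff_proj_eq] at he
      exact (hd k l he.2).2.2.2.1
  have huv : ∀ e ∈ Eq, u e ≤ v e := by
    intro e he
    rw [hEq, List.mem_toFinset] at he
    have hes : e ∈ G.edgeSet := q.edges_subset_edgeSet he
    induction e using Sym2.inductionOn with
    | hf k l =>
      have hadj : G.Adj k l := hes
      have h := (hd k l hadj.ne).2.2.1
      simpa [hadj] using h
  -- bound on the u-part
  have hupart : ∑ e ∈ Eall, u e ≤ ∑ e ∈ Eq, v e := by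
    have h1 : ∑ e ∈ Eall, u e = (∑ e ∈ Eall \ Eq, u e) + ∑ e ∈ Eq, u e :=
      (Finset.sum_sdiff hsubE).symm
    have h2 : ∑ e ∈ Eall \ Eq, u e ≤ 0 :=
      Finset.sum_nonpos fun e he => hu_nonpos e (Finset.mem_sdiff.mp he).1
    have h3 : ∑ e ∈ Eq, u e ≤ ∑ e ∈ Eq, v e :=
      Finset.sum_le_sum fun e he => huv e he
    linarith
  -- bound on the t-part via telescoping
  have htele : t i - t j = (q.darts.map (fun d => t d.toProd.1 - t d.toProd.2)).sum :=
    (walk_telescope G t q).symm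
  have hdartbound : ∀ d ∈ q.darts,
      t d.toProd.1 - t d.toProd.2 ≤ 1 - v d.edge := by
    intro d _
    have hadj : G.Adj d.toProd.1 d.toProd.2 := d.adj
    have h := (hd d.toProd.1 d.toProd.2 hadj.ne).1
    have : d.edge = s(d.toProd.1, d.toProd.2) := rfl
    rw [this]; linarith
  have htpart : t i - t j ≤ (D : ℝ) - ∑ e ∈ Eq, v e := by
    rw [htele]
    calc (q.darts.map (fun d => t d.toProd.1 - t d.toProd.2)).sum
        ≤ (q.darts.map (fun d => 1 - v d.edge)).sum := by
          apply List.sum_le_sum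
          intro d hdm
          exact hdartbound d hdm
      _ = (q.darts.map (fun _ => (1:ℝ))).sum - (q.darts.map (fun d => v d.edge)).sum :=
          list_sum_map_sub' q.darts (fun _ => 1) (fun d => v d.edge)
      _ = (D : ℝ) - ∑ e ∈ Eq, v e := by
          congr 1
          · rw [list_sum_map_one']
            have : q.darts.length = q.length := q.length_darts
            rw [this, hqlen]
          · rw [hEq, List.sum_toFinset v hqnodup]
            have : q.edges = q.darts.map SimpleGraph.Dart.edge := rfl
            rw [this, List.map_map]
            rfl
  -- combine
  have hupper : w ≤ (D : ℝ) := by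
    rw [← hdual]
    unfold dualValue
    have : (∑ e ∈ Eall, u e) + t i - t j
        ≤ (∑ e ∈ Eq, v e) + ((D : ℝ) - ∑ e ∈ Eq, v e) := by linarith
    simpa [hEall] using this.trans_eq (by ring)
  linarith
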